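/- For p ∈ ℕ₀ and n ∈ ℕ₀, lim_{ν→0} d/dν [1/((ν+p+1)_n)] = (p!/(p+n)!)·(ψ(p+1) − ψ(p+1+n)), where (z)_n is the Pochhammer symbol and ψ is the digamma function. -/

import Mathlib

open Real

lemma Gamma_ne_zero_of_pos {x : ℝ} (hx : 0 < x) : Real.Gamma x ≠ 0 :=
  (Real.Gamma_pos_of_pos hx).ne'

lemma digamma_aux {x : ℝ} (hx : 0 < x) :
    deriv Real.Gamma (x + 1) / Real.Gamma (x + 1) =
      deriv Real.Gamma x / Real.Gamma x + 1 / x := by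
  have hd : DifferentiableAt ℝ Real.Gamma x :=
    Real.differentiableAt_Gamma (fun m => (((neg_nonpos.mpr (Nat.cast_nonneg m)).trans_lt (by linarith)).ne'))
  have hd1 : DifferentiableAt ℝ Real.Gamma (x + 1) :=
    Real.differentiableAt_Gamma (fun m => (((neg_nonpos.mpr (Nat.cast_nonneg m)).trans_lt (by linarith)).ne'))
  have h1 : HasDerivAt (fun y => Real.Gamma (y + 1)) (deriv Real.Gamma (x + 1)) x := by
    simpa [Function.comp_def] using (hd1.hasDerivAt.comp x ((hasDerivAt_id x).add_const 1))
  have h2 : HasDerivAt (fun y => y * Real.Gamma y)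
      (1 * Real.Gamma x + x * deriv Real.Gamma x) x :=
    (hasDerivAt_id x).mul hd.hasDerivAt
  have heq : (fun y => Real.Gamma (y + 1)) =ᶠ[nhds x] (fun y => y * Real.Gamma y) := by
    filter_upwards [eventually_ne_nhds hx.ne'] with y hy
    exact Real.Gamma_add_one hy
  have h1' : HasDerivAt (fun y => y * Real.Gamma y) (deriv Real.Gamma (x + 1)) x :=
    h1.congr_of_eventuallyEq heq.symm
  have hder : deriv Real.Gamma (x + 1) = Real.Gamma x + x * deriv Real.Gamma x := by
    have := h1'.unique h2; linarith
  rw [hder, Real.Gamma_add_one hx.ne']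
  have hΓ : Real.Gamma x ≠ 0 := Gamma_ne_zero_of_pos hx
  field_simp
  ring

/-- The digamma function `ψ = Γ'/Γ`. -/
noncomputable def digamma (x : ℝ) : ℝ := deriv Real.Gamma x / Real.Gamma x

lemma digamma_add_nat {x : ℝ} (hx : 0 < x) (n : ℕ) :
    digamma (x + n) = digamma x + ∑ i ∈ Finset.range n, 1 / (x + i) := by
  induction n with
  | zero => simp [digamma]
  | succ k ih =>
      have hxk : 0 < x + k := by positivity
      have : digamma (x + (k + 1)) = digamma (x + k) + 1 / (x + k) := by
        have := digamma_aux hxk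
        simp only [digamma]
        rw [show x + (↑k + 1) = (x + k) + 1 by push_cast; ring]
        exact this
      push_cast
      rw [this, ih, Finset.sum_range_succ]
      push_cast
      ring

lemma factorial_prod (p n : ℕ) :
    (p.factorial : ℝ) * ∏ i ∈ Finset.range n, ((p : ℝ) + 1 + i) = ((p + n).factorial : ℝ) := by
  induction n with
  | zero => simp
  | succ k ih =>
      rw [Finset.prod_range_succ, ← mul_assoc, ih, show p + (k+1) = (p + k) + 1 from rfl,
        Nat.factorial_succ]
      push_cast
      ring

theorem deriv_inv_pochhammer (p n : ℕ) :
    deriv (fun ν : ℝ => 1 / ∏ i ∈ Finset.range n, (ν + (p : ℝ) + 1 + i)) 0 =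
      ((p.factorial : ℝ) / (p + n).factorial) *
        (digamma ((p : ℝ) + 1) - digamma ((p : ℝ) + 1 + n)) := by
  set c : ℕ → ℝ := fun i => (p : ℝ) + 1 + i with hc
  have hcpos : ∀ i, 0 < c i := fun i => by simp only [hc]; positivity
  have hprod_pos : 0 < ∏ i ∈ Finset.range n, c i := Finset.prod_pos fun i _ => hcpos i
  have hf : HasDerivAt (fun ν : ℝ => ∏ i ∈ Finset.range n, (ν + (p : ℝ) + 1 + i))
      (∑ i ∈ Finset.range n, (∏ j ∈ (Finset.range n).erase i, c j)) 0 := by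
    have := HasDerivAt.fun_finsetProd (u := Finset.range n)
      (f := fun i (ν : ℝ) => ν + (p : ℝ) + 1 + i) (f' := fun _ => (1 : ℝ)) (x := 0)
      (fun i _ => by simpa [← add_assoc] using ((hasDerivAt_id (0:ℝ)).add_const ((p:ℝ) + 1 + i)))
    simpa [hc, smul_eq_mul, zero_add, add_assoc] using this
  have hf0 : (fun ν : ℝ => ∏ i ∈ Finset.range n, (ν + (p : ℝ) + 1 + i)) 0
      = ∏ i ∈ Finset.range n, c i := by
    simp [hc, zero_add, add_assoc]
  have hinv : HasDerivAt (fun ν : ℝ => 1 / ∏ i ∈ Finset.range n, (ν + (p : ℝ) + 1 + i))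
      (-(∑ i ∈ Finset.range n, (∏ j ∈ (Finset.range n).erase i, c j)) /
        (∏ i ∈ Finset.range n, c i) ^ 2) 0 := by
    simpa [one_div, hf0] using hf.fun_inv (by simpa [hc, zero_add] using hprod_pos.ne')
  rw [hinv.deriv]
  -- erase products
  have herase : ∀ i ∈ Finset.range n, (∏ j ∈ (Finset.range n).erase i, c j)
      = (∏ j ∈ Finset.range n, c j) / c i := fun i hi => by
    rw [eq_div_iff (hcpos i).ne', mul_comm]
    exact Finset.mul_prod_erase _ _ hi
  rw [Finset.sum_congr rfl herase]
  have hsum : ∑ i ∈ Finset.range n, (∏ j ∈ Finset.range n, c j) / c i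
      = (∏ j ∈ Finset.range n, c j) * ∑ i ∈ Finset.range n, 1 / c i := by
    rw [Finset.mul_sum]; exact Finset.sum_congr rfl fun i _ => by field_simp
  rw [hsum]
  have hdig : digamma ((p : ℝ) + 1 + n) = digamma ((p : ℝ) + 1)
      + ∑ i ∈ Finset.range n, 1 / c i := digamma_add_nat (by positivity) n
  rw [hdig]
  have hfac := factorial_prod p n
  have hfp : (0:ℝ) < (p.factorial : ℝ) := by positivity
  have h2 : ((p + n).factorial : ℝ) ≠ 0 := by positivity
  rw [div_mul_eq_mul_div, ← hfac]
  field_simp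
  ring
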